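/- Let F_{m,1} = {Δ + ΓΓᵗ : Δ diagonal positive definite m×m, Γ ∈ ℝ^m} with m ≥ 4, and let Σ ∈ F_{m,1} be diagonal. Then the tangent cone T_{F_{m,1}}(Σ) equals the topological closure of the cone T_{m,1} = {Δ + ΓΓᵗ : Δ any diagonal symmetric m×m matrix, Γ ∈ ℝ^m}. -/
import Mathlib


open Filter Topology

/-- The tangent cone of a set `s` at a point `x`: limits of sequences `αₙ • (θₙ - x)`
with `αₙ > 0` and `θₙ ∈ s` converging to `x`. -/
def tangentConeAt' {E : Type*} [AddCommGroup E] [Module ℝ E] [TopologicalSpace E]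
    (s : Set E) (x : E) : Set E :=
  {y | ∃ (α : ℕ → ℝ) (p : ℕ → E), (∀ n, 0 < α n) ∧ (∀ n, p n ∈ s) ∧
    Tendsto p atTop (𝓝 x) ∧ Tendsto (fun n => α n • (p n - x)) atTop (𝓝 y)}

/-- The one-factor analysis parameter space `F_{m,1}`. -/
def oneFactorSet (m : ℕ) : Set (Matrix (Fin m) (Fin m) ℝ) :=
  {S | ∃ δ Γ : Fin m → ℝ, (∀ i, 0 < δ i) ∧ S = Matrix.diagonal δ + Matrix.vecMulVec Γ Γ}

/-- The cone `T_{m,1}` with arbitrary (real) diagonal part. -/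
def oneFactorCone (m : ℕ) : Set (Matrix (Fin m) (Fin m) ℝ) :=
  {S | ∃ δ Γ : Fin m → ℝ, S = Matrix.diagonal δ + Matrix.vecMulVec Γ Γ}

instance matrixFirstCountable (m : ℕ) :
    FirstCountableTopology (Matrix (Fin m) (Fin m) ℝ) :=
  inferInstanceAs (FirstCountableTopology (Fin m → Fin m → ℝ))

/-- Scaling a `diagonal + rank-one` matrix by a nonnegative constant. -/
lemma smul_decomp {m : ℕ} (c : ℝ) (hc : 0 ≤ c) (d Γ : Fin m → ℝ) :
    c • (Matrix.diagonal d + Matrix.vecMulVec Γ Γ) =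
      Matrix.diagonal (c • d) + Matrix.vecMulVec (Real.sqrt c • Γ) (Real.sqrt c • Γ) := by
  ext i j
  have hs : Real.sqrt c * Real.sqrt c = c := Real.mul_self_sqrt hc
  by_cases h : i = j
  · subst h
    simp only [Matrix.smul_apply, Matrix.add_apply, Matrix.diagonal_apply_eq,
      Matrix.vecMulVec_apply, Pi.smul_apply, smul_eq_mul]
    linear_combination (-(Γ i * Γ i)) * hs
  · simp only [Matrix.smul_apply, Matrix.add_apply, Matrix.diagonal_apply_ne _ h,
      Matrix.vecMulVec_apply, Pi.smul_apply, smul_eq_mul]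
    linear_combination (-(Γ i * Γ j)) * hs

theorem tangentCone_oneFactor_diagonal (m : ℕ) (hm : 4 ≤ m)
    (S₀ : Matrix (Fin m) (Fin m) ℝ) (hS : S₀ ∈ oneFactorSet m)
    (hdiag : ∀ i j, i ≠ j → S₀ i j = 0) :
    tangentConeAt' (oneFactorSet m) S₀ = closure (oneFactorCone m) := by
  obtain ⟨δ, Γ₀, hδ, hEq⟩ := hS
  set δ₀ : Fin m → ℝ := fun i => S₀ i i with hδ₀def
  -- the diagonal of S₀ is positive
  have hδ₀ : ∀ i, 0 < δ₀ i := by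
    intro i
    show 0 < S₀ i i
    rw [hEq]
    simp only [Matrix.add_apply, Matrix.diagonal_apply_eq, Matrix.vecMulVec_apply]
    exact add_pos_of_pos_of_nonneg (hδ i) (mul_self_nonneg _)
  -- S₀ is a diagonal matrix
  have hS₀ : S₀ = Matrix.diagonal δ₀ := by
    ext i j
    by_cases h : i = j
    · subst h; simp [hδ₀def]
    · rw [Matrix.diagonal_apply_ne _ h]; exact hdiag i j h
  apply Set.eq_of_subset_of_subset
  · -- tangent cone ⊆ closure of the cone
    rintro y ⟨α, p, hα, hp, _, hlim⟩
    refine mem_closure_of_tendsto hlim (Filter.Eventually.of_forall fun n => ?_)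
    obtain ⟨dn, Γn, _, hpn⟩ := hp n
    have hsub : p n - S₀ =
        Matrix.diagonal (fun i => dn i - δ₀ i) + Matrix.vecMulVec Γn Γn := by
      rw [hpn, hS₀, ← Matrix.diagonal_sub]
      abel
    refine ⟨α n • fun i => dn i - δ₀ i, Real.sqrt (α n) • Γn, ?_⟩
    rw [hsub, smul_decomp _ (hα n).le]
  · -- closure of the cone ⊆ tangent cone
    intro y hy
    obtain ⟨q, hq, hqy⟩ := mem_closure_iff_seq_limit.1 hy
    choose d Γ hd using hq
    -- scaling factors
    set B : ℕ → ℝ := fun n => ∑ j, |d n j| / δ₀ j with hB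
    have hBnn : ∀ n, 0 ≤ B n := fun n =>
      Finset.sum_nonneg fun j _ => div_nonneg (abs_nonneg _) (hδ₀ j).le
    set α : ℕ → ℝ := fun n => ((n : ℝ) + 1) * (1 + B n) with hαdef
    have hα1 : ∀ n : ℕ, (n : ℝ) + 1 ≤ α n := by
      intro n
      have h1 : (1 : ℝ) ≤ 1 + B n := by linarith [hBnn n]
      calc (n : ℝ) + 1 = ((n : ℝ) + 1) * 1 := by ring
        _ ≤ ((n : ℝ) + 1) * (1 + B n) := by
            apply mul_le_mul_of_nonneg_left h1; positivity

    have hαpos : ∀ n, 0 < α n := fun n =>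
      lt_of_lt_of_le (by positivity) (hα1 n)
    -- key positivity bound: α n * δ₀ i > |d n i|
    have hkey : ∀ (n : ℕ) (i : Fin m), |d n i| < α n * δ₀ i := by
      intro n i
      have hBi : |d n i| / δ₀ i ≤ B n :=
        Finset.single_le_sum (f := fun j => |d n j| / δ₀ j)
          (fun j _ => div_nonneg (abs_nonneg _) (hδ₀ j).le) (Finset.mem_univ i)
      rw [div_le_iff₀ (hδ₀ i)] at hBi
      have h3 : (1 + B n) * δ₀ i ≤ α n * δ₀ i := by
        apply mul_le_mul_of_nonneg_right _ (hδ₀ i).le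
        show (1 : ℝ) + B n ≤ ((n : ℝ) + 1) * (1 + B n)
        have h4 : (0 : ℝ) ≤ (n : ℝ) := Nat.cast_nonneg n
        nlinarith [hBnn n]
      nlinarith [hδ₀ i]
    -- positivity of perturbed diagonals
    have hpos : ∀ (n : ℕ) (i : Fin m), 0 < δ₀ i + (α n)⁻¹ * d n i := by
      intro n i
      have h1 : 0 < α n * δ₀ i + d n i := by
        have := neg_abs_le (d n i)
        linarith [hkey n i]
      have h2 : δ₀ i + (α n)⁻¹ * d n i = (α n)⁻¹ * (α n * δ₀ i + d n i) := by
        rw [mul_add, inv_mul_cancel_left₀ (hαpos n).ne']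
      rw [h2]
      exact mul_pos (inv_pos.2 (hαpos n)) h1
    -- the approximating sequence in the one-factor set
    set p : ℕ → Matrix (Fin m) (Fin m) ℝ := fun n => S₀ + (α n)⁻¹ • q n with hpdef
    have hpmem : ∀ n, p n ∈ oneFactorSet m := by
      intro n
      refine ⟨fun i => δ₀ i + (α n)⁻¹ * d n i, Real.sqrt (α n)⁻¹ • Γ n,
        fun i => hpos n i, ?_⟩
      show S₀ + (α n)⁻¹ • q n = _
      rw [hd n, smul_decomp _ (inv_nonneg.2 (hαpos n).le), hS₀, ← add_assoc,
        Matrix.diagonal_add]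
      congr 1
    -- (α n)⁻¹ → 0
    have hαinv : Tendsto (fun n => (α n)⁻¹) atTop (𝓝 0) := by
      have h0 : Tendsto (fun n : ℕ => 1 / ((n : ℝ) + 1)) atTop (𝓝 0) :=
        tendsto_one_div_add_atTop_nhds_zero_nat
      refine squeeze_zero (fun n => (inv_pos.2 (hαpos n)).le) (fun n => ?_) h0
      rw [one_div]
      exact inv_anti₀ (by positivity) (hα1 n)
    -- (α n)⁻¹ • q n → 0
    have hsmul0 : Tendsto (fun n => (α n)⁻¹ • q n) atTop (𝓝 0) := by
      have := hαinv.smul hqy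
      simpa using this
    refine ⟨α, p, hαpos, hpmem, ?_, ?_⟩
    · have h5 : Tendsto (fun _ : ℕ => S₀) atTop (𝓝 S₀) := tendsto_const_nhds
      have := h5.add hsmul0
      simpa using this
    · have heq : ∀ n, α n • (p n - S₀) = q n := by
        intro n
        show α n • (S₀ + (α n)⁻¹ • q n - S₀) = q n
        rw [add_sub_cancel_left, smul_smul, mul_inv_cancel₀ (hαpos n).ne', one_smul]
      simpa only [heq] using hqy
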